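/- Under the hyperbolic-secant perturbation with bandwidth h > 0, the perturbed calibration function η(s) = E_{w_s}[η₀] satisfies the uniform derivative bound sup_{s ∈ [0,1]} |η'(s)| ≤ tanh(1/h)/(2h) ≤ 1/(2h), for any probability measure μ on [0,1] and any measurable η₀ : [0,1] → [0,1]. -/

import Mathlib

open Real MeasureTheory

/-- Sech kernel normalization constant `Z(u,h) = ∫₀¹ sech((t-u)/h) dt`. -/
noncomputable def Zker (u h : ℝ) : ℝ := ∫ t in (0:ℝ)..1, 1 / Real.cosh ((t - u) / h)

/-- Unnormalized kernel weight `(1/Z(u,h))·sech((s-u)/h)`. -/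
noncomputable def kerW (h s u : ℝ) : ℝ := (1 / Zker u h) * (1 / Real.cosh ((s - u) / h))

/-- Denominator `D(s) = ∫ (1/Z(u,h))·sech((s-u)/h) dμ(u)`. -/
noncomputable def Dfun (μ : Measure ℝ) (h s : ℝ) : ℝ := ∫ u, kerW h s u ∂μ

/-- Expectation of `A` under the reweighted measure `w_s` (density `kerW h s / D(s)` w.r.t. μ). -/
noncomputable def wExp (μ : Measure ℝ) (h s : ℝ) (A : ℝ → ℝ) : ℝ :=
  (∫ u, A u * kerW h s u ∂μ) / Dfun μ h s

/-- Covariance of `A` and `B` under `w_s`. -/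
noncomputable def wCov (μ : Measure ℝ) (h s : ℝ) (A B : ℝ → ℝ) : ℝ :=
  wExp μ h s (fun u => A u * B u) - wExp μ h s A * wExp μ h s B

lemma hasDerivAt_gd (x : ℝ) : HasDerivAt (fun y => arctan (sinh y)) (1 / cosh x) x := by
  have h1 := Real.hasDerivAt_arctan (sinh x)
  have h2 := Real.hasDerivAt_sinh x
  have h3 := h1.comp x h2
  refine h3.congr_deriv ?_
  have hc := Real.cosh_sq x
  have hp := Real.cosh_pos x
  field_simp
  nlinarith

lemma sech_intble (u h : ℝ) : IntervalIntegrable (fun t => 1 / cosh ((t - u)/h)) volume 0 1 := by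
  apply Continuous.intervalIntegrable
  exact continuous_const.div (Real.continuous_cosh.comp (by fun_prop)) fun x => (Real.cosh_pos _).ne'

lemma Zker_eq (u h : ℝ) (hh : 0 < h) :
    Zker u h = h * (arctan (sinh ((1 - u)/h)) - arctan (sinh ((0 - u)/h))) := by
  have key : ∀ t ∈ Set.uIcc (0:ℝ) 1,
      HasDerivAt (fun t => h * arctan (sinh ((t - u)/h))) (1 / cosh ((t - u)/h)) t := by
    intro t _
    have h1 : HasDerivAt (fun t : ℝ => (t - u)/h) (1/h) t := by
      simpa using ((hasDerivAt_id t).sub_const u).div_const h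
    have h2 := (hasDerivAt_gd ((t - u)/h)).comp t h1
    have h3 := h2.const_mul h
    refine h3.congr_deriv ?_
    field_simp
  rw [Zker, intervalIntegral.integral_eq_sub_of_hasDerivAt key (sech_intble u h)]
  ring

lemma Zker_pos (u h : ℝ) (hh : 0 < h) : 0 < Zker u h := by
  rw [Zker_eq u h hh]
  apply mul_pos hh
  rw [sub_pos]
  exact arctan_strictMono (Real.sinh_lt_sinh.2 ((div_lt_div_iff_of_pos_right hh).2 (by linarith)))

lemma continuous_Zker (h : ℝ) (hh : 0 < h) : Continuous (fun u => Zker u h) := by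
  have : (fun u => Zker u h)
      = fun u => h * (arctan (sinh ((1 - u)/h)) - arctan (sinh ((0 - u)/h))) :=
    funext fun u => Zker_eq u h hh
  rw [this]
  exact continuous_const.mul ((Real.continuous_arctan.comp (Real.continuous_sinh.comp (by fun_prop))).sub
    (Real.continuous_arctan.comp (Real.continuous_sinh.comp (by fun_prop))))

lemma Zker_ge (h : ℝ) (hh : 0 < h) {u : ℝ} (hu : u ∈ Set.Icc (0:ℝ) 1) :
    1 / cosh (1/h) ≤ Zker u h := by
  have := intervalIntegral.integral_mono_on zero_le_one
    (intervalIntegrable_const (c := 1 / cosh (1/h)))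
    (sech_intble u h) (fun t ht => by
      apply div_le_div_of_nonneg_left zero_le_one (Real.cosh_pos _)
      apply Real.cosh_le_cosh.2
      rw [abs_div, abs_div, abs_of_pos hh]
      apply (div_le_div_iff_of_pos_right hh).2
      obtain ⟨h0, h1⟩ := hu; obtain ⟨t0, t1⟩ := ht
      rw [abs_one, abs_le]; constructor <;> linarith)
  simpa [Zker] using this

lemma Zker_le_one (u h : ℝ) (hh : 0 < h) : Zker u h ≤ 1 := by
  have := intervalIntegral.integral_mono_on zero_le_one (sech_intble u h)
    (intervalIntegrable_const (c := (1:ℝ))) (fun t _ => by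
      rw [div_le_one (Real.cosh_pos _)]
      exact Real.one_le_cosh _)
  simpa [Zker] using this

lemma tanh_mono {x y : ℝ} (hxy : x ≤ y) : tanh x ≤ tanh y := by
  rw [Real.tanh_eq_sinh_div_cosh, Real.tanh_eq_sinh_div_cosh,
    div_le_div_iff₀ (Real.cosh_pos x) (Real.cosh_pos y)]
  have h1 := Real.sinh_sub x y
  have h2 : sinh (x - y) ≤ 0 := by
    rw [← Real.sinh_zero]
    exact Real.sinh_le_sinh.2 (by linarith)
  linarith

lemma abs_tanh_le {y a : ℝ} (hy : |y| ≤ a) : |tanh y| ≤ tanh a := by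
  rw [abs_le] at hy ⊢
  refine ⟨?_, tanh_mono hy.2⟩
  have := tanh_mono hy.1
  rwa [Real.tanh_neg] at this

lemma tanh_nonneg' {a : ℝ} (ha : 0 ≤ a) : 0 ≤ tanh a := by
  have := tanh_mono ha
  rwa [Real.tanh_zero] at this

lemma tanh_le_one' (a : ℝ) : tanh a ≤ 1 := by
  rw [Real.tanh_eq_sinh_div_cosh, div_le_one (Real.cosh_pos _)]
  have := Real.cosh_sub_sinh a
  have := Real.exp_pos (-a)
  linarith

lemma kerW_pos (h s u : ℝ) (hh : 0 < h) : 0 < kerW h s u :=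
  mul_pos (by simpa using (Zker_pos u h hh)) (by positivity)

lemma kerW_le (h s u : ℝ) (hh : 0 < h) (hu : u ∈ Set.Icc (0:ℝ) 1) :
    kerW h s u ≤ cosh (1/h) := by
  have hZ := Zker_ge h hh hu
  have hZpos := Zker_pos u h hh
  have h1 : 1 / Zker u h ≤ cosh (1/h) := by
    rw [div_le_iff₀ hZpos]
    calc (1:ℝ) = cosh (1/h) * (1/cosh (1/h)) := by
          field_simp
      _ ≤ cosh (1/h) * Zker u h := by
          apply mul_le_mul_of_nonneg_left hZ (Real.cosh_pos _).le
  calc kerW h s u ≤ (1 / Zker u h) * 1 := by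
        apply mul_le_mul_of_nonneg_left ?_ (by positivity)
        rw [div_le_one (Real.cosh_pos _)]; exact Real.one_le_cosh _
    _ = 1 / Zker u h := mul_one _
    _ ≤ cosh (1/h) := h1

lemma kerW_ge (h s u : ℝ) (hh : 0 < h) (hu : u ∈ Set.Icc (0:ℝ) 1) (hs : s ∈ Set.Icc (0:ℝ) 1) :
    1 / cosh (1/h) ≤ kerW h s u := by
  have hZ1 := Zker_le_one u h hh
  have hZpos := Zker_pos u h hh
  have h1 : (1:ℝ) ≤ 1 / Zker u h := by
    rw [le_div_iff₀ hZpos]; linarith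
  have h2 : 1 / cosh (1/h) ≤ 1 / cosh ((s - u)/h) := by
    apply div_le_div_of_nonneg_left zero_le_one (Real.cosh_pos _)
    apply Real.cosh_le_cosh.2
    rw [abs_div, abs_div, abs_of_pos hh]
    apply (div_le_div_iff_of_pos_right hh).2
    obtain ⟨h0, h1'⟩ := hu; obtain ⟨s0, s1⟩ := hs
    rw [abs_one, abs_le]; constructor <;> linarith
  calc 1 / cosh (1/h) ≤ 1 / cosh ((s-u)/h) := h2
    _ = 1 * (1 / cosh ((s-u)/h)) := (one_mul _).symm
    _ ≤ (1 / Zker u h) * (1 / cosh ((s-u)/h)) := by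
        apply mul_le_mul_of_nonneg_right h1 (by positivity)

lemma continuous_kerW_u (h s : ℝ) (hh : 0 < h) : Continuous (fun u => kerW h s u) := by
  unfold kerW
  apply Continuous.mul
  · exact continuous_const.div (continuous_Zker h hh) (fun u => (Zker_pos u h hh).ne')
  · exact continuous_const.div (Real.continuous_cosh.comp (by fun_prop)) fun x => (Real.cosh_pos _).ne'

lemma hasDerivAt_kerW (h u : ℝ) (hh : 0 < h) (x : ℝ) :
    HasDerivAt (fun x => kerW h x u) (-(1/h) * tanh ((x - u)/h) * kerW h x u) x := by
  have h1 : HasDerivAt (fun x : ℝ => (x - u)/h) (1/h) x := by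
    simpa using ((hasDerivAt_id x).sub_const u).div_const h
  have h2 : HasDerivAt (fun x : ℝ => cosh ((x - u)/h)) (sinh ((x - u)/h) * (1/h)) x :=
    (Real.hasDerivAt_cosh _).comp x h1
  have h3 := (h2.inv (Real.cosh_pos _).ne').const_mul (1 / Zker u h)
  have he : (fun x => kerW h x u) = fun x => (1 / Zker u h) * (cosh ((x - u)/h))⁻¹ := by
    funext y; simp [kerW, one_div]
  rw [he]
  refine h3.congr_deriv ?_
  rw [Real.tanh_eq_sinh_div_cosh]
  have := Real.cosh_pos ((x - u)/h)
  simp only [kerW]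
  field_simp

lemma continuous_tanh' : Continuous Real.tanh := by
  have : Real.tanh = fun x => sinh x / cosh x := funext Real.tanh_eq_sinh_div_cosh
  rw [this]
  exact Real.continuous_sinh.div Real.continuous_cosh fun x => (Real.cosh_pos x).ne'

lemma integrable_mul_kerW (μ : Measure ℝ) [IsProbabilityMeasure μ]
    (hae : ∀ᵐ u ∂μ, u ∈ Set.Icc (0:ℝ) 1) (h s : ℝ) (hh : 0 < h)
    {g : ℝ → ℝ} (hg : Measurable g) (hgb : ∀ᵐ u ∂μ, |g u| ≤ 1) :
    Integrable (fun u => g u * kerW h s u) μ := by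
  apply Integrable.mono' (integrable_const (cosh (1/h)))
  · exact (hg.mul (continuous_kerW_u h s hh).measurable).aestronglyMeasurable
  · filter_upwards [hae, hgb] with u hu hgu
    rw [Real.norm_eq_abs, abs_mul]
    have hk := kerW_pos h s u hh
    have hk2 := kerW_le h s u hh hu
    rw [abs_of_pos hk]
    calc |g u| * kerW h s u ≤ 1 * cosh (1/h) := by
          apply mul_le_mul hgu hk2 hk.le zero_le_one
      _ = cosh (1/h) := one_mul _

lemma hasDerivAt_weighted_integral (μ : Measure ℝ) [IsProbabilityMeasure μ]
    (hae : ∀ᵐ u ∂μ, u ∈ Set.Icc (0:ℝ) 1) (h : ℝ) (hh : 0 < h) (s : ℝ)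
    {g : ℝ → ℝ} (hg : Measurable g) (hgb : ∀ᵐ u ∂μ, |g u| ≤ 1) :
    HasDerivAt (fun x => ∫ u, g u * kerW h x u ∂μ)
      (∫ u, g u * (-(1/h) * tanh ((s - u)/h) * kerW h s u) ∂μ) s := by
  have key := hasDerivAt_integral_of_dominated_loc_of_deriv_le (μ := μ)
    (F := fun x u => g u * kerW h x u)
    (F' := fun x u => g u * (-(1/h) * tanh ((x - u)/h) * kerW h x u))
    (x₀ := s) (bound := fun _ => cosh (1/h) / h) (Metric.ball_mem_nhds s one_pos)
    ?_ ?_ ?_ ?_ ?_ ?_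
  · exact key.2
  · filter_upwards with x
    exact ((hg.mul (continuous_kerW_u h x hh).measurable)).aestronglyMeasurable
  · exact integrable_mul_kerW μ hae h s hh hg hgb
  · apply Measurable.aestronglyMeasurable
    apply hg.mul
    apply Measurable.mul
    · exact (continuous_tanh'.comp (by fun_prop)).measurable.const_mul _
    · exact (continuous_kerW_u h s hh).measurable
  · filter_upwards [hae, hgb] with u hu hgu x _
    rw [Real.norm_eq_abs, abs_mul, abs_mul, abs_mul]
    have hk := kerW_pos h x u hh
    have hk2 := kerW_le h x u hh hu
    rw [abs_of_pos hk]
    have ht : |tanh ((x - u)/h)| ≤ 1 := le_trans (abs_tanh_le le_rfl) (tanh_le_one' _)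
    have hq : |(-(1/h))| = 1/h := by rw [abs_neg, abs_of_pos (by positivity)]
    rw [hq]
    calc |g u| * (1/h * |tanh ((x - u)/h)| * kerW h x u)
        ≤ 1 * (1/h * 1 * cosh (1/h)) := by
          apply mul_le_mul hgu ?_ (by positivity) zero_le_one
          apply mul_le_mul ?_ hk2 hk.le (by positivity)
          apply mul_le_mul_of_nonneg_left ht (by positivity)
      _ = cosh (1/h) / h := by ring
  · exact integrable_const _
  · filter_upwards with u x _
    exact (hasDerivAt_kerW h u hh x).const_mul (g u)

theorem perturbed_calibration_lipschitz_bound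
    (μ : Measure ℝ) [IsProbabilityMeasure μ] (hsupp : μ (Set.Icc (0:ℝ) 1) = 1)
    (η₀ : ℝ → ℝ) (hη₀meas : Measurable η₀) (hη₀b : ∀ u ∈ Set.Icc (0:ℝ) 1, η₀ u ∈ Set.Icc (0:ℝ) 1)
    (h : ℝ) (hh : 0 < h) :
    (∀ s ∈ Set.Icc (0:ℝ) 1,
        |deriv (fun s' => wExp μ h s' η₀) s| ≤ Real.tanh (1 / h) / (2 * h)) ∧
    Real.tanh (1 / h) / (2 * h) ≤ 1 / (2 * h) := by
  have hT0 : 0 ≤ Real.tanh (1/h) := tanh_nonneg' (by positivity)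
  have hT1 : Real.tanh (1/h) ≤ 1 := tanh_le_one' _
  constructor
  swap
  · gcongr
  intro s hs
  -- a.e. membership in [0,1]
  have hcompl : μ (Set.Icc (0:ℝ) 1)ᶜ = 0 := by
    have hm := measure_compl (measurableSet_Icc : MeasurableSet (Set.Icc (0:ℝ) 1))
      (measure_ne_top μ _)
    rw [hsupp, measure_univ] at hm
    simpa using hm
  have hae : ∀ᵐ u ∂μ, u ∈ Set.Icc (0:ℝ) 1 := by
    rw [MeasureTheory.ae_iff]
    exact hcompl
  have hηb : ∀ᵐ u ∂μ, |η₀ u| ≤ 1 := by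
    filter_upwards [hae] with u hu
    obtain ⟨h0, h1⟩ := hη₀b u hu
    rw [abs_le]; constructor <;> linarith
  have honeb : ∀ᵐ u ∂μ, |(1:ℝ)| ≤ 1 := by filter_upwards with u; simp
  have hBmeas : Measurable (fun u => Real.tanh ((s - u)/h)) :=
    (continuous_tanh'.comp (by fun_prop)).measurable
  have hBball : ∀ u : ℝ, |Real.tanh ((s - u)/h)| ≤ 1 :=
    fun u => le_trans (abs_tanh_le le_rfl) (tanh_le_one' _)
  -- integrability
  have intk : Integrable (fun u => kerW h s u) μ := by
    have := integrable_mul_kerW μ hae h s hh measurable_const honeb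
    simpa using this
  have intηk := integrable_mul_kerW μ hae h s hh hη₀meas hηb
  have intBk := integrable_mul_kerW μ hae h s hh hBmeas
    (by filter_upwards with u; exact hBball u)
  have intηBk := integrable_mul_kerW μ hae h s hh (hη₀meas.mul hBmeas)
    (by filter_upwards [hηb] with u hu
        calc |η₀ u * Real.tanh ((s - u)/h)| = |η₀ u| * |Real.tanh ((s - u)/h)| := abs_mul _ _
          _ ≤ 1 * 1 := mul_le_mul hu (hBball u) (abs_nonneg _) zero_le_one
          _ = 1 := one_mul _)
  -- derivatives
  have hN := hasDerivAt_weighted_integral μ hae h hh s hη₀meas hηb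
  have hD := hasDerivAt_weighted_integral μ hae h hh s measurable_const honeb
  simp only [one_mul] at hD
  set I1 : ℝ := ∫ u, η₀ u * Real.tanh ((s - u)/h) * kerW h s u ∂μ with hI1
  set I2 : ℝ := ∫ u, Real.tanh ((s - u)/h) * kerW h s u ∂μ with hI2
  set N : ℝ := ∫ u, η₀ u * kerW h s u ∂μ with hNdef
  set D : ℝ := ∫ u, kerW h s u ∂μ with hDdef
  have e1 : (∫ u, η₀ u * (-(1/h) * Real.tanh ((s - u)/h) * kerW h s u) ∂μ) = -(1/h) * I1 := by
    rw [hI1, ← MeasureTheory.integral_const_mul _]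
    congr 1; funext u; ring
  have e2 : (∫ u, -(1/h) * Real.tanh ((s - u)/h) * kerW h s u ∂μ) = -(1/h) * I2 := by
    rw [hI2, ← MeasureTheory.integral_const_mul _]
    congr 1; funext u; ring
  rw [e1] at hN
  rw [e2] at hD
  -- positivity of D
  have hDpos : 0 < D := by
    have hge : ∀ᵐ u ∂μ, 1/cosh (1/h) ≤ kerW h s u := by
      filter_upwards [hae] with u hu
      exact kerW_ge h s u hh hu hs
    have hmono := MeasureTheory.integral_mono_ae (integrable_const (1/cosh (1/h))) intk hge
    have hconst : (∫ _, 1/cosh (1/h) ∂μ) = 1/cosh (1/h) := by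
      simp [measure_univ]
    rw [hconst] at hmono
    calc (0:ℝ) < 1/cosh (1/h) := by positivity
      _ ≤ D := hmono
  have hN0 : 0 ≤ N := by
    apply MeasureTheory.integral_nonneg_of_ae
    filter_upwards [hae] with u hu
    exact mul_nonneg (hη₀b u hu).1 (kerW_pos h s u hh).le
  have hND : N ≤ D := by
    apply MeasureTheory.integral_mono_ae intηk intk
    filter_upwards [hae] with u hu
    calc η₀ u * kerW h s u ≤ 1 * kerW h s u :=
          mul_le_mul_of_nonneg_right (hη₀b u hu).2 (kerW_pos h s u hh).le
      _ = kerW h s u := one_mul _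
  set m : ℝ := N / D with hm
  have hm0 : 0 ≤ m := div_nonneg hN0 hDpos.le
  have hm1 : m ≤ 1 := (div_le_one hDpos).2 hND
  -- covariance rewriting
  have efun : (fun u => (η₀ u - m) * Real.tanh ((s - u)/h) * kerW h s u)
      = fun u => η₀ u * Real.tanh ((s - u)/h) * kerW h s u
        - m * (Real.tanh ((s - u)/h) * kerW h s u) := by
    funext u; ring
  have intJ : Integrable (fun u => (η₀ u - m) * Real.tanh ((s - u)/h) * kerW h s u) μ := by
    rw [efun]; exact intηBk.sub (intBk.const_mul m)
  have eJ : (∫ u, (η₀ u - m) * Real.tanh ((s - u)/h) * kerW h s u ∂μ) = I1 - m * I2 := by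
    rw [efun, MeasureTheory.integral_sub (f := fun u => η₀ u * Real.tanh ((s - u)/h) * kerW h s u) intηBk (intBk.const_mul m),
      MeasureTheory.integral_const_mul _, hI1, hI2]
  set T : ℝ := Real.tanh (1/h) with hTdef
  -- pointwise bound
  have hptw : ∀ᵐ u ∂μ, |(η₀ u - m) * Real.tanh ((s - u)/h) * kerW h s u|
      ≤ (T*m) * kerW h s u + (T*(1-2*m)) * (η₀ u * kerW h s u) := by
    filter_upwards [hae] with u hu
    have hk := kerW_pos h s u hh
    have hBb : |Real.tanh ((s - u)/h)| ≤ T := by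
      apply abs_tanh_le
      rw [abs_div, abs_of_pos hh]
      apply (div_le_div_iff_of_pos_right hh).2
      obtain ⟨h0, h1⟩ := hu; obtain ⟨s0, s1⟩ := hs
      rw [abs_le]; constructor <;> linarith
    obtain ⟨h0, h1⟩ := hη₀b u hu
    have hE : |η₀ u - m| ≤ m*(1-η₀ u) + (1-m)*η₀ u := by
      rw [abs_le]; constructor <;> nlinarith
    rw [abs_mul, abs_mul, abs_of_pos hk]
    calc |η₀ u - m| * |Real.tanh ((s - u)/h)| * kerW h s u
        ≤ (m*(1-η₀ u) + (1-m)*η₀ u) * T * kerW h s u := by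
          apply mul_le_mul_of_nonneg_right ?_ hk.le
          apply mul_le_mul hE hBb (abs_nonneg _) (by nlinarith)
      _ = (T*m) * kerW h s u + (T*(1-2*m)) * (η₀ u * kerW h s u) := by ring
  -- integral bound
  have hJ : |I1 - m * I2| ≤ T*m*D + T*(1-2*m)*N := by
    rw [← eJ]
    calc |∫ u, (η₀ u - m) * Real.tanh ((s - u)/h) * kerW h s u ∂μ|
        ≤ ∫ u, |(η₀ u - m) * Real.tanh ((s - u)/h) * kerW h s u| ∂μ := by
          have := norm_integral_le_integral_norm
            (fun u => (η₀ u - m) * Real.tanh ((s - u)/h) * kerW h s u) (μ := μ)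
          simpa only [Real.norm_eq_abs] using this
      _ ≤ ∫ u, ((T*m) * kerW h s u + (T*(1-2*m)) * (η₀ u * kerW h s u)) ∂μ := by
          exact MeasureTheory.integral_mono_ae intJ.abs
            ((intk.const_mul _).add (intηk.const_mul _)) hptw
      _ = T*m*D + T*(1-2*m)*N := by
          rw [MeasureTheory.integral_add (intk.const_mul _) (intηk.const_mul _),
            MeasureTheory.integral_const_mul _, MeasureTheory.integral_const_mul _]
  -- assemble derivative
  have hdiv := hN.div hD (ne_of_gt hDpos)
  have hfeq : (fun s' => wExp μ h s' η₀)
      = fun y => (∫ u, η₀ u * kerW h y u ∂μ) / (∫ u, kerW h y u ∂μ) := by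
    funext y; simp [wExp, Dfun]
  rw [hfeq, HasDerivAt.deriv (f := fun y => (∫ u, η₀ u * kerW h y u ∂μ) / (∫ u, kerW h y u ∂μ)) hdiv]
  -- final numeric estimate
  have hmD : m * D = N := div_mul_cancel₀ N (ne_of_gt hDpos)
  have hVeq : (-(1/h) * I1 * D - N * (-(1/h) * I2)) / D ^ 2 = -((I1 - m * I2)/(h*D)) := by
    rw [hm]
    field_simp
    ring
  rw [hVeq, abs_neg, abs_div, abs_of_pos (by positivity : (0:ℝ) < h * D)]
  rw [div_le_div_iff₀ (by positivity) (by positivity)]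
  have key : T*m*D + T*(1-2*m)*N ≤ T*D/2 := by
    rw [← hmD]
    nlinarith [mul_nonneg (mul_nonneg hT0 hDpos.le) (sq_nonneg (1 - 2*m))]
  calc |I1 - m * I2| * (2*h) ≤ (T*D/2) * (2*h) :=
        mul_le_mul_of_nonneg_right (hJ.trans key) (by positivity)
    _ = T * (h*D) := by ring
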